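/- arXiv:1901.06979 — 6 statements merged into one kernel-verified Lean document; each statement's English description precedes it below -/
import Mathlib

section
/- Let J be an absolutely one-homogeneous convex lower semicontinuous functional on a real Hilbert space H, with null-space N(J) = {u ∈ H : J(u) = 0}. Then N(J) is a linear subspace of H, and J(u+w) = J(u) for all u ∈ H and w ∈ N(J). -/
/-- The class `𝒞` of convex, lower semicontinuous, absolutely one-homogeneous
functionals `J : H → ℝ ∪ {+∞}` on a real Hilbert space. -/
def IsAbsOneHom {H : Type*} [NormedAddCommGroup H] [InnerProductSpace ℝ H]
    (J : H → EReal) : Prop :=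
  (∀ u v : H, ∀ a b : ℝ, 0 ≤ a → 0 ≤ b → a + b = 1 →
      J (a • u + b • v) ≤ (a : EReal) * J u + (b : EReal) * J v) ∧
  LowerSemicontinuous J ∧
  (∀ c : ℝ, c ≠ 0 → ∀ u : H, J (c • u) = ((|c| : ℝ) : EReal) * J u) ∧
  J 0 = 0

/-- Subdifferential of `J` at `u`:
`∂J(u) = {p ∈ H : ⟨p,v⟩ ≤ J(v) ∀ v, ⟨p,u⟩ = J(u)}`. -/
def subdiff {H : Type*} [NormedAddCommGroup H] [InnerProductSpace ℝ H]
    (J : H → EReal) (u : H) : Set H :=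
  {p : H | (∀ v : H, ((inner ℝ p v : ℝ) : EReal) ≤ J v) ∧ ((inner ℝ p u : ℝ) : EReal) = J u}

private lemma half_add_half (x : EReal) :
    ((1/2 : ℝ) : EReal) * x + ((1/2 : ℝ) : EReal) * x = x := by
  induction x using EReal.rec with
  | bot =>
      rw [EReal.coe_mul_bot_of_pos (by norm_num)]
      rfl
  | coe r =>
      norm_cast
      ring
  | top =>
      rw [EReal.coe_mul_top_of_pos (by norm_num)]
      rfl

private lemma two_mul_half (x : EReal) :
    ((2 : ℝ) : EReal) * (((1/2 : ℝ) : EReal) * x) = x := by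
  rw [← mul_assoc, ← EReal.coe_mul]
  norm_num

theorem nullspace_linear_and_invariance {H : Type*} [NormedAddCommGroup H]
    [InnerProductSpace ℝ H] [CompleteSpace H]
    (J : H → EReal) (hJ : IsAbsOneHom J) :
    J (0 : H) = 0 ∧
    (∀ u v : H, J u = 0 → J v = 0 → J (u + v) = 0) ∧
    (∀ (c : ℝ) (u : H), J u = 0 → J (c • u) = 0) ∧
    (∀ u w : H, J w = 0 → J (u + w) = J u) := by
  obtain ⟨hconv, _, hhom, h0⟩ := hJ
  have hneg : ∀ w : H, J (-w) = J w := by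
    intro w
    have h := hhom (-1) (by norm_num) w
    simpa using h
  have hnn : ∀ w : H, 0 ≤ J w := by
    intro w
    have h := hconv w (-w) (1/2) (1/2) (by norm_num) (by norm_num) (by norm_num)
    have e : (1/2 : ℝ) • w + (1/2 : ℝ) • (-w) = (0 : H) := by
      rw [smul_neg, add_neg_cancel]
    rw [e, h0, hneg] at h
    rwa [half_add_half (J w)] at h
  -- key: J (u + w) ≤ J u whenever J w = 0
  have key : ∀ u w : H, J w = 0 → J (u + w) ≤ J u := by
    intro u w hw
    have h := hconv u w (1/2) (1/2) (by norm_num) (by norm_num) (by norm_num)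
    rw [hw, mul_zero, add_zero] at h
    have e : (2 : ℝ) • ((1/2 : ℝ) • u + (1/2 : ℝ) • w) = u + w := by
      rw [smul_add, smul_smul, smul_smul]
      norm_num
    have h2 := hhom 2 (by norm_num) ((1/2 : ℝ) • u + (1/2 : ℝ) • w)
    rw [e] at h2
    have habs : |(2:ℝ)| = 2 := by norm_num
    rw [habs] at h2
    calc J (u + w) = ((2:ℝ) : EReal) * J ((1/2 : ℝ) • u + (1/2 : ℝ) • w) := h2
      _ ≤ ((2:ℝ) : EReal) * (((1/2 : ℝ) : EReal) * J u) := by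
          exact mul_le_mul_of_nonneg_left h (by norm_num)
      _ = J u := two_mul_half (J u)
  refine ⟨h0, ?_, ?_, ?_⟩
  · intro u v hu hv
    have h1 := key u v hv
    rw [hu] at h1
    exact le_antisymm h1 (hnn _)
  · intro c u hu
    rcases eq_or_ne c 0 with rfl | hc
    · simpa using h0
    · rw [hhom c hc, hu, mul_zero]
  · intro u w hw
    refine le_antisymm (key u w hw) ?_
    have h := key (u + w) (-w) (by rw [hneg, hw])
    rwa [add_neg_cancel_right] at h
end

section
/- Let J be an absolutely one-homogeneous convex lsc functional on a real Hilbert space H and let u be an eigenvector with eigenvalue λ ≥ 0, i.e., λu ∈ ∂J(u). Then λu is the unique element of minimal norm in ∂J(u): ‖λu‖ ≤ ‖p‖ for all p ∈ ∂J(u), with equality only for p = λu. -/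
theorem eigenvector_minimal_norm_subgradient {H : Type*} [NormedAddCommGroup H]
    [InnerProductSpace ℝ H] [CompleteSpace H]
    (J : H → EReal) (hJ : IsAbsOneHom J)
    (u : H) (l : ℝ) (hl : 0 ≤ l) (heig : l • u ∈ subdiff J u) :
    ∀ p ∈ subdiff J u, ‖l • u‖ ≤ ‖p‖ ∧ (‖p‖ = ‖l • u‖ → p = l • u) := by
  intro p hp
  obtain ⟨hp1, hp2⟩ := hp
  obtain ⟨he1, he2⟩ := heig
  have hpu : (inner ℝ p u : ℝ) = inner ℝ (l • u) u := by
    have := hp2.trans he2.symm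
    exact_mod_cast this
  have key : (inner ℝ p (l • u) : ℝ) = ‖l • u‖ ^ 2 := by
    rw [real_inner_smul_right, hpu]
    rw [real_inner_smul_left, real_inner_self_eq_norm_sq, norm_smul]
    simp [mul_pow, sq_abs]
    ring
  have hcs : ‖l • u‖ ^ 2 ≤ ‖p‖ * ‖l • u‖ := by
    rw [← key]; exact real_inner_le_norm p (l • u)
  constructor
  · rcases eq_or_lt_of_le (norm_nonneg (l • u)) with h0 | h0
    · rw [← h0]; exact norm_nonneg p
    · exact le_of_mul_le_mul_right (by rwa [sq, mul_comm] at hcs) h0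
  · intro hn
    have : ‖p - l • u‖ ^ 2 = 0 := by
      rw [norm_sub_sq_real, key, hn]; ring
    have := pow_eq_zero_iff (n := 2) (by norm_num) |>.mp this
    exact sub_eq_zero.mp (norm_eq_zero.mp this)
end

section
/- Let J be an absolutely one-homogeneous convex lsc functional on a real Hilbert space H, with K = ∂J(0). If p is a point of maximal norm in K (i.e., ‖p‖ ≥ ‖q‖ for all q ∈ K), then p ∈ ∂J(p), i.e., p is an eigenvector with eigenvalue 1. -/
theorem maximal_norm_is_eigenvector {H : Type*} [NormedAddCommGroup H]
    [InnerProductSpace ℝ H] [CompleteSpace H]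
    (J : H → EReal) (hJ : IsAbsOneHom J) (K : Set H)
    (hK : K = {r : H | ∀ v : H, ((inner ℝ r v : ℝ) : EReal) ≤ J v})
    (hJK : ∀ u : H, J u = sSup ((fun p : H => ((inner ℝ p u : ℝ) : EReal)) '' K))
    (p : H) (hp : p ∈ K) (hmax : ∀ q ∈ K, ‖q‖ ≤ ‖p‖) :
    p ∈ subdiff J p := by
  have hpK : ∀ v : H, ((inner ℝ p v : ℝ) : EReal) ≤ J v := by rw [hK] at hp; exact hp
  refine ⟨hpK, le_antisymm (hpK p) ?_⟩
  rw [hJK p]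
  apply sSup_le
  rintro x ⟨q, hq, rfl⟩
  have h1 : (inner ℝ q p : ℝ) ≤ inner ℝ p p := by
    calc (inner ℝ q p : ℝ) ≤ ‖q‖ * ‖p‖ := real_inner_le_norm q p
    _ ≤ ‖p‖ * ‖p‖ := by
        have := hmax q hq
        nlinarith [norm_nonneg p]
    _ = inner ℝ p p := (real_inner_self_eq_norm_mul_norm p).symm
  simpa using EReal.coe_le_coe_iff.mpr h1
end

section
/- Let J be an absolutely one-homogeneous convex lsc functional on a real Hilbert space H, let u ∈ dom(∂J), and let p be the element of minimal norm in the closed convex set ∂J(u). If p ∈ ∂J(p) (p is an eigenvector with eigenvalue 1), then ⟨p, p - q⟩ = 0 for all q ∈ ∂J(u); equivalently, ∂J(u) ⊂ ∂J(p). -/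
private lemma ereal_combo {a b : ℝ} (ha : 0 < a) (hb : 0 < b) (hab : a + b = 1)
    (x : EReal) (hx : x ≠ ⊥) : (a : EReal) * x + (b : EReal) * x = x := by
  induction x using EReal.rec with
  | bot => exact absurd rfl hx
  | coe r =>
    rw [← EReal.coe_mul, ← EReal.coe_mul, ← EReal.coe_add]
    norm_cast
    rw [← add_mul, hab, one_mul]
  | top =>
    rw [EReal.coe_mul_top_of_pos ha, EReal.coe_mul_top_of_pos hb]
    rfl

theorem minsub_of_minimal_norm_eigenvector {H : Type*} [NormedAddCommGroup H]
    [InnerProductSpace ℝ H] [CompleteSpace H]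
    (J : H → EReal) (hJ : IsAbsOneHom J)
    (u p : H) (hp : p ∈ subdiff J u)
    (hmin : ∀ q ∈ subdiff J u, ‖p‖ ≤ ‖q‖)
    (heig : p ∈ subdiff J p) :
    (∀ q ∈ subdiff J u, (inner ℝ p (p - q) : ℝ) = 0) ∧ subdiff J u ⊆ subdiff J p := by
  have key : ∀ q ∈ subdiff J u, (inner ℝ p (p - q) : ℝ) = 0 := by
    intro q hq
    -- Upper bound: ⟨q,p⟩ ≤ J p = ⟨p,p⟩
    have hJp : ((inner ℝ p p : ℝ) : EReal) = J p := heig.2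
    have hqp : (inner ℝ q p : ℝ) ≤ (inner ℝ p p : ℝ) := by
      have := hq.1 p
      rw [← hJp] at this
      exact_mod_cast this
    -- Lower bound via minimality: for t ∈ (0,1), (1-t)•p + t•q ∈ subdiff J u
    have hmem : ∀ t : ℝ, 0 < t → t < 1 → (1 - t) • p + t • q ∈ subdiff J u := by
      intro t ht0 ht1
      have h1t : (0:ℝ) < 1 - t := by linarith
      constructor
      · intro v
        have hJv_ne : J v ≠ ⊥ := by
          intro h
          have := hp.1 v
          rw [h] at this
          exact absurd this (by simp)
        have h1 : (((1 - t) * inner ℝ p v : ℝ) : EReal) ≤ ((1 - t : ℝ) : EReal) * J v := by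
          rw [EReal.coe_mul]
          exact mul_le_mul_of_nonneg_left (hp.1 v) (by exact_mod_cast h1t.le)
        have h2 : ((t * inner ℝ q v : ℝ) : EReal) ≤ ((t : ℝ) : EReal) * J v := by
          rw [EReal.coe_mul]
          exact mul_le_mul_of_nonneg_left (hq.1 v) (by exact_mod_cast ht0.le)
        have : ((inner ℝ ((1 - t) • p + t • q) v : ℝ) : EReal)
            = (((1 - t) * inner ℝ p v + t * inner ℝ q v : ℝ) : EReal) := by
          congr 1
          simp [inner_add_left, real_inner_smul_left]
        rw [this, EReal.coe_add]
        calc (((1 - t) * inner ℝ p v : ℝ) : EReal) + ((t * inner ℝ q v : ℝ) : EReal)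
            ≤ ((1 - t : ℝ) : EReal) * J v + ((t : ℝ) : EReal) * J v :=
              add_le_add h1 h2
          _ = J v := ereal_combo h1t ht0 (by ring) _ hJv_ne
      · have : ((inner ℝ ((1 - t) • p + t • q) u : ℝ) : EReal)
            = (((1 - t) * inner ℝ p u + t * inner ℝ q u : ℝ) : EReal) := by
          congr 1
          simp [inner_add_left, real_inner_smul_left]
        rw [this]
        have hpu : ((inner ℝ p u : ℝ) : EReal) = J u := hp.2
        have hqu : ((inner ℝ q u : ℝ) : EReal) = J u := hq.2
        have hquu : (inner ℝ q u : ℝ) = (inner ℝ p u : ℝ) := by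
          have := hqu.trans hpu.symm
          exact_mod_cast this
        rw [hquu, ← hpu]
        norm_cast
        ring_nf
    -- From minimality: 0 ≤ 2⟨p,q-p⟩ + t‖q-p‖² for all t ∈ (0,1)
    have hineq : ∀ t : ℝ, 0 < t → t < 1 →
        0 ≤ 2 * (inner ℝ p (q - p) : ℝ) + t * ‖q - p‖ ^ 2 := by
      intro t ht0 ht1
      have hm := hmin _ (hmem t ht0 ht1)
      have heq : (1 - t) • p + t • q = p + t • (q - p) := by
        rw [smul_sub]; module
      rw [heq] at hm
      have hsq : ‖p‖ ^ 2 ≤ ‖p + t • (q - p)‖ ^ 2 := by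
        have := norm_nonneg p
        nlinarith
      have hexp : ‖p + t • (q - p)‖ ^ 2
          = ‖p‖ ^ 2 + 2 * (t * (inner ℝ p (q - p) : ℝ)) + t ^ 2 * ‖q - p‖ ^ 2 := by
        rw [norm_add_sq_real, real_inner_smul_right, norm_smul]
        simp [mul_pow, abs_of_pos ht0]
      rw [hexp] at hsq
      nlinarith
    have hge : 0 ≤ (inner ℝ p (q - p) : ℝ) := by
      by_contra h
      push_neg at h
      set c : ℝ := (inner ℝ p (q - p) : ℝ) with hc
      set N : ℝ := ‖q - p‖ ^ 2 with hN
      have hN0 : 0 ≤ N := sq_nonneg _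
      have ht0 : 0 < min (1/2 : ℝ) ((-c) / (N + 1)) := by
        apply lt_min (by norm_num)
        apply div_pos (by linarith) (by linarith)
      have ht1 : min (1/2 : ℝ) ((-c) / (N + 1)) < 1 :=
        lt_of_le_of_lt (min_le_left _ _) (by norm_num)
      have := hineq _ ht0 ht1
      have hle : min (1/2 : ℝ) ((-c) / (N + 1)) ≤ (-c) / (N + 1) := min_le_right _ _
      have hdiv : (-c) / (N + 1) * N < -c := by
        rw [div_mul_eq_mul_div, div_lt_iff₀ (by linarith)]
        nlinarith
      nlinarith [mul_le_mul_of_nonneg_right hle hN0]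
    have : (inner ℝ p (q - p) : ℝ) = inner ℝ p q - inner ℝ p p := by
      rw [inner_sub_right]
    have hpq : (inner ℝ p q : ℝ) = inner ℝ q p := real_inner_comm q p
    have hsub : (inner ℝ p (p - q) : ℝ) = inner ℝ p p - inner ℝ p q := by
      rw [inner_sub_right]
    rw [hsub]
    rw [this] at hge
    linarith [hqp, hpq ▸ hge]
  refine ⟨key, ?_⟩
  intro q hq
  have h0 := key q hq
  have hsub : (inner ℝ p (p - q) : ℝ) = inner ℝ p p - inner ℝ p q := by
    rw [inner_sub_right]
  rw [hsub] at h0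
  refine ⟨hq.1, ?_⟩
  have : (inner ℝ q p : ℝ) = (inner ℝ p p : ℝ) := by
    rw [real_inner_comm]; linarith
  rw [this]
  exact heig.2
end

section
/- Let K ⊂ ℝⁿ be a convex polyhedron with K = -K, defining J(u) = sup_{q∈K}⟨q,u⟩. Suppose that for every u ∈ ℝⁿ the element p of minimal norm in ∂J(u) satisfies the MINSUB condition ⟨p, p - q⟩ = 0 for all q ∈ ∂J(u). Then every such minimal-norm subgradient p satisfies p ∈ ∂J(p), i.e., it is an eigenvector with eigenvalue 1. -/
/-- Subdifferential of `J(u) = sup_{q ∈ K} ⟨q,u⟩` at `u`: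
`∂J(u) = {q ∈ K : ⟨q,u⟩ = J(u)}`. -/
def polySubdiff {n : ℕ} (K : Set (EuclideanSpace ℝ (Fin n)))
    (J : EuclideanSpace ℝ (Fin n) → ℝ) (u : EuclideanSpace ℝ (Fin n)) :
    Set (EuclideanSpace ℝ (Fin n)) :=
  {q : EuclideanSpace ℝ (Fin n) | q ∈ K ∧ (inner ℝ q u : ℝ) = J u}

/-- Over a polytope, the support function value is attained at a vertex which
dominates all points of the polytope. -/
lemma polySupport_max {n : ℕ} (S : Finset (EuclideanSpace ℝ (Fin n))) (hS : S.Nonempty)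
    (J : EuclideanSpace ℝ (Fin n) → ℝ)
    (hJ : ∀ u, J u = sSup ((fun q : EuclideanSpace ℝ (Fin n) => (inner ℝ q u : ℝ)) ''
      (convexHull ℝ (S : Set (EuclideanSpace ℝ (Fin n))))))
    (x : EuclideanSpace ℝ (Fin n)) :
    ∃ b ∈ S, (∀ q ∈ convexHull ℝ (S : Set (EuclideanSpace ℝ (Fin n))),
      (inner ℝ q x : ℝ) ≤ (inner ℝ b x : ℝ)) ∧ J x = (inner ℝ b x : ℝ) := by
  obtain ⟨b, hbS, hbmax⟩ := S.exists_max_image (fun w => (inner ℝ w x : ℝ)) hS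
  have hlin : IsLinearMap ℝ (fun y : EuclideanSpace ℝ (Fin n) => (inner ℝ y x : ℝ)) :=
    ⟨fun a b => inner_add_left a b x, fun c y => real_inner_smul_left y x c⟩
  have hbound : ∀ q ∈ convexHull ℝ (S : Set (EuclideanSpace ℝ (Fin n))),
      (inner ℝ q x : ℝ) ≤ (inner ℝ b x : ℝ)  := by
    intro q hq
    have : convexHull ℝ (S : Set (EuclideanSpace ℝ (Fin n))) ⊆
        {y : EuclideanSpace ℝ (Fin n) | (inner ℝ y x : ℝ) ≤ (inner ℝ b x : ℝ)} := by
      apply convexHull_min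
      · intro w hw
        exact hbmax w hw
      · exact convex_halfSpace_le hlin _
    exact this hq
  have hbK : b ∈ convexHull ℝ (S : Set (EuclideanSpace ℝ (Fin n))) :=
    subset_convexHull ℝ _ hbS
  refine ⟨b, hbS, hbound, ?_⟩
  rw [hJ]
  apply le_antisymm
  · apply csSup_le
    · exact ⟨(inner ℝ b x : ℝ), ⟨b, hbK, rfl⟩⟩
    · rintro _ ⟨q, hq, rfl⟩
      exact hbound q hq
  · apply le_csSup
    · exact ⟨(inner ℝ b x : ℝ), by rintro _ ⟨q, hq, rfl⟩; exact hbound q hq⟩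
    · exact ⟨b, hbK, rfl⟩

theorem polyhedral_minsub_implies_eigenvector {n : ℕ}
    (K : Set (EuclideanSpace ℝ (Fin n)))
    (hpoly : ∃ S : Finset (EuclideanSpace ℝ (Fin n)), K = convexHull ℝ (S : Set (EuclideanSpace ℝ (Fin n))))
    (hsym : K = -K)
    (J : EuclideanSpace ℝ (Fin n) → ℝ)
    (hJ : ∀ u, J u = sSup ((fun q : EuclideanSpace ℝ (Fin n) => (inner ℝ q u : ℝ)) '' K))
    (hminsub : ∀ u p, p ∈ polySubdiff K J u → (∀ r ∈ polySubdiff K J u, ‖p‖ ≤ ‖r‖) →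
      ∀ q ∈ polySubdiff K J u, (inner ℝ p (p - q) : ℝ) = 0) :
    ∀ u p, p ∈ polySubdiff K J u → (∀ r ∈ polySubdiff K J u, ‖p‖ ≤ ‖r‖) →
      p ∈ polySubdiff K J p := by
  intro u p hp hpmin
  obtain ⟨S, rfl⟩ := hpoly
  obtain ⟨hpK, hpu⟩ := hp
  -- S is nonempty since p ∈ convexHull S
  have hS : S.Nonempty := by
    by_contra h
    rw [Finset.not_nonempty_iff_eq_empty] at h
    subst h
    simp only [Finset.coe_empty, convexHull_empty] at hpK
    exact hpK
  set K := convexHull ℝ (S : Set (EuclideanSpace ℝ (Fin n))) with hKdef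
  -- support function facts
  have hmax := polySupport_max S hS J hJ
  -- every point of K has inner ⟨·, u⟩ at most J u
  obtain ⟨bu, hbuS, hbu_bound, hbu_eq⟩ := hmax u
  have huK : ∀ q ∈ K, (inner ℝ q u : ℝ) ≤ J u := by
    intro q hq; rw [hbu_eq]; exact hbu_bound q hq
  refine ⟨hpK, ?_⟩
  -- the maximizing vertex for x = p
  obtain ⟨b, hbS, hb_bound, hb_eq⟩ := hmax p
  have hpb : (inner ℝ p p : ℝ) ≤ (inner ℝ b p : ℝ) := hb_bound p hpK
  rw [hb_eq]
  -- suffices : inner b p ≤ inner p p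
  by_contra hne
  have hbad : (inner ℝ p p : ℝ) < (inner ℝ b p : ℝ) := lt_of_le_of_ne hpb hne
  clear hne hpb
  -- p ≠ 0
  have hp0 : p ≠ 0 := by
    rintro rfl
    simp at hbad
  have hpnorm : (0:ℝ) < ‖p‖ := norm_pos_iff.mpr hp0
  -- set of bad vertices
  set B : Finset (EuclideanSpace ℝ (Fin n)) :=
    S.filter (fun w => (inner ℝ p p : ℝ) < (inner ℝ w p : ℝ)) with hBdef
  have hbB : b ∈ B := Finset.mem_filter.mpr ⟨hbS, hbad⟩
  -- the critical time for each bad vertex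
  set f : EuclideanSpace ℝ (Fin n) → ℝ :=
    fun w => ((inner ℝ p u : ℝ) - (inner ℝ w u : ℝ)) / ((inner ℝ w p : ℝ) - (inner ℝ p p : ℝ))
    with hfdef
  obtain ⟨w, hwB, hwmin⟩ := B.exists_min_image f ⟨b, hbB⟩
  obtain ⟨hwS, hwbad⟩ := Finset.mem_filter.mp hwB
  set t := f w with htdef
  -- basic facts for bad vertices
  have hnum : ∀ v ∈ B, (0:ℝ) ≤ (inner ℝ p u : ℝ) - (inner ℝ v u : ℝ) := by
    intro v hv
    obtain ⟨hvS, _⟩ := Finset.mem_filter.mp hv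
    have := huK v (subset_convexHull ℝ _ hvS)
    rw [← hpu] at this
    linarith
  have hden : ∀ v ∈ B, (0:ℝ) < (inner ℝ v p : ℝ) - (inner ℝ p p : ℝ) := by
    intro v hv
    obtain ⟨_, hvb⟩ := Finset.mem_filter.mp hv
    linarith
  have ht0 : (0:ℝ) ≤ t := div_nonneg (hnum w hwB) (le_of_lt (hden w hwB))
  -- the key equality for w : ⟨w,u⟩ + t⟨w,p⟩ = ⟨p,u⟩ + t⟨p,p⟩
  have hweq : (inner ℝ w u : ℝ) + t * (inner ℝ w p : ℝ) = (inner ℝ p u : ℝ) + t * (inner ℝ p p : ℝ) := by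
    have h := hden w hwB
    have : t * ((inner ℝ w p : ℝ) - (inner ℝ p p : ℝ)) = (inner ℝ p u : ℝ) - (inner ℝ w u : ℝ) := by
      rw [htdef, hfdef]
      exact div_mul_cancel₀ _ (ne_of_gt h)
    nlinarith [this]
  set x : EuclideanSpace ℝ (Fin n) := u + t • p with hxdef
  have hinner_x : ∀ q : EuclideanSpace ℝ (Fin n),
      (inner ℝ q x : ℝ) = (inner ℝ q u : ℝ) + t * (inner ℝ q p : ℝ) := by
    intro q
    rw [hxdef, inner_add_right, real_inner_smul_right]
  -- Claim A: every vertex is dominated by p in direction x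
  have hA : ∀ v ∈ S, (inner ℝ v x : ℝ) ≤ (inner ℝ p x : ℝ) := by
    intro v hvS
    rw [hinner_x, hinner_x]
    by_cases hvB : v ∈ B
    · have h1 : t ≤ f v := hwmin v hvB
      have h2 := hden v hvB
      have h3 : t * ((inner ℝ v p : ℝ) - (inner ℝ p p : ℝ)) ≤
          f v * ((inner ℝ v p : ℝ) - (inner ℝ p p : ℝ)) :=
        mul_le_mul_of_nonneg_right h1 (le_of_lt h2)
      have h4 : f v * ((inner ℝ v p : ℝ) - (inner ℝ p p : ℝ)) =
          (inner ℝ p u : ℝ) - (inner ℝ v u : ℝ) := by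
        rw [hfdef]
        exact div_mul_cancel₀ _ (ne_of_gt h2)
      nlinarith
    · have h1 : (inner ℝ v p : ℝ) ≤ (inner ℝ p p : ℝ) := by
        have := Finset.mem_filter.not.mp hvB
        push_neg at this
        exact this hvS
      have h2 : (inner ℝ v u : ℝ) ≤ (inner ℝ p u : ℝ) := by
        have := huK v (subset_convexHull ℝ _ hvS)
        rw [← hpu] at this
        exact this
      nlinarith
  -- Claim B: p ∈ ∂J(x)
  obtain ⟨bx, hbxS, hbx_bound, hbx_eq⟩ := hmax x
  have hpx : (inner ℝ p x : ℝ) = J x := by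
    apply le_antisymm
    · rw [hbx_eq]; exact hbx_bound p hpK
    · rw [hbx_eq]; exact hA bx hbxS
  have hpSub : p ∈ polySubdiff K J x := ⟨hpK, hpx⟩
  -- Claim C: w ∈ ∂J(x)
  have hwsub : w ∈ polySubdiff K J x := by
    refine ⟨subset_convexHull ℝ _ hwS, ?_⟩
    rw [← hpx, hinner_x, hinner_x, hweq]
  -- Claim D: p is the minimal-norm element of ∂J(x)
  have hDmin : ∀ r ∈ polySubdiff K J x, ‖p‖ ≤ ‖r‖ := by
    rcases eq_or_lt_of_le ht0 with ht0' | htpos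
    · -- t = 0 : x = u, use the hypothesis directly
      have hxu : x = u := by
        rw [hxdef, ← ht0', zero_smul, add_zero]
      rw [hxu]
      exact hpmin
    · intro r hr
      obtain ⟨hrK, hrx⟩ := hr
      have h1 : (inner ℝ r u : ℝ) + t * (inner ℝ r p : ℝ) = (inner ℝ p u : ℝ) + t * (inner ℝ p p : ℝ) := by
        rw [← hinner_x, ← hinner_x, hrx, hpx]
      have h2 : (inner ℝ r u : ℝ) ≤ (inner ℝ p u : ℝ) := by
        have := huK r hrK
        rw [← hpu] at this
        exact this
      have h3 : (inner ℝ p p : ℝ) ≤ (inner ℝ r p : ℝ) := by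
        nlinarith
      have h4 : (inner ℝ r p : ℝ) ≤ ‖r‖ * ‖p‖ := real_inner_le_norm r p
      have h5 : (inner ℝ p p : ℝ) = ‖p‖ * ‖p‖ := real_inner_self_eq_norm_mul_norm p
      nlinarith
  -- apply MINSUB at x with q = w : contradiction
  have hcontra := hminsub x p hpSub hDmin w hwsub
  rw [inner_sub_right] at hcontra
  have : (inner ℝ p w : ℝ) = (inner ℝ w p : ℝ) := real_inner_comm w p
  nlinarith
end

section
/- Suppose the gradient flow ∂ₜu = -p, p(t) ∈ ∂J(u(t)), u(0)=f, generates eigenvectors p(t) ∈ ∂J(p(t)) for all t > 0, and p(t) has minimal norm in ∂J(u(t)). Then for all 0 < r ≤ s ≤ t: ⟨p(t), p(s) - p(r)⟩ = 0. Consequently, the spectral increments φ(s₁,t₁)=p(t₁)-p(s₁) and φ(s₂,t₂)=p(t₂)-p(s₂) are orthogonal whenever 0 < s₁ ≤ t₁ ≤ s₂ ≤ t₂, and moreover p(s) ∈ ∂J(p(t)) for all 0 < s ≤ t. -/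
theorem orthogonality_of_spectral_increments {H : Type*} [NormedAddCommGroup H]
    [InnerProductSpace ℝ H] [CompleteSpace H]
    (J : H → EReal) (hJ : IsAbsOneHom J)
    (u p : ℝ → H) (f : H) (hu0 : u 0 = f)
    (hflow : ∀ t : ℝ, 0 < t → HasDerivWithinAt u (-(p t)) (Set.Ici t) t)
    (hsub : ∀ t : ℝ, 0 < t → p t ∈ subdiff J (u t))
    (hmin : ∀ t : ℝ, 0 < t → ∀ q ∈ subdiff J (u t), ‖p t‖ ≤ ‖q‖)
    (heig : ∀ t : ℝ, 0 < t → p t ∈ subdiff J (p t))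
    (hprev : ∀ s t : ℝ, 0 < s → s ≤ t → p s ∈ subdiff J (u t)) :
    (∀ r s t : ℝ, 0 < r → r ≤ s → s ≤ t → (inner ℝ (p t) (p s - p r) : ℝ) = 0) ∧
    (∀ s₁ t₁ s₂ t₂ : ℝ, 0 < s₁ → s₁ ≤ t₁ → t₁ ≤ s₂ → s₂ ≤ t₂ →
      (inner ℝ (p t₁ - p s₁) (p t₂ - p s₂) : ℝ) = 0) ∧
    (∀ s t : ℝ, 0 < s → s ≤ t → p s ∈ subdiff J (p t)) := by
  -- Key lemma: for t > 0 and q ∈ ∂J(u t), ⟨p t, q⟩ = ⟨p t, p t⟩.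
  have key : ∀ t : ℝ, 0 < t → ∀ q ∈ subdiff J (u t),
      (inner ℝ (p t) q : ℝ) = (inner ℝ (p t) (p t) : ℝ) := by
    intro t ht q hq
    -- upper bound: ⟨q, p t⟩ ≤ J (p t) = ⟨p t, p t⟩
    have hup : (inner ℝ (p t) q : ℝ) ≤ (inner ℝ (p t) (p t) : ℝ) := by
      have h1 : ((inner ℝ q (p t) : ℝ) : EReal) ≤ J (p t) := hq.1 (p t)
      have h2 : ((inner ℝ (p t) (p t) : ℝ) : EReal) = J (p t) := (heig t ht).2
      rw [← h2, EReal.coe_le_coe_iff] at h1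
      rwa [real_inner_comm] at h1
    -- lower bound via convexity and minimality
    have hlow : 0 ≤ (inner ℝ (p t) (q - p t) : ℝ) := by
      have hnorm : ∀ ε : ℝ, 0 < ε → ε ≤ 1 →
          ‖p t‖ ≤ ‖p t + ε • (q - p t)‖ := by
        intro ε hε hε1
        apply hmin t ht
        have hw : p t + ε • (q - p t) = (1 - ε) • p t + ε • q := by
          module
        rw [hw]
        constructor
        · intro v
          have ha : ((inner ℝ (p t) v : ℝ) : EReal) ≤ J v := (hsub t ht).1 v
          have hb : ((inner ℝ q v : ℝ) : EReal) ≤ J v := hq.1 v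
          have hin : (inner ℝ ((1 - ε) • p t + ε • q) v : ℝ)
              = (1 - ε) * (inner ℝ (p t) v : ℝ) + ε * (inner ℝ q v : ℝ) := by
            simp [inner_add_left, real_inner_smul_left]
          rw [hin]
          calc ((( 1 - ε) * (inner ℝ (p t) v : ℝ) + ε * (inner ℝ q v : ℝ) : ℝ) : EReal)
              ≤ ((max (inner ℝ (p t) v : ℝ) (inner ℝ q v : ℝ) : ℝ) : EReal) := by
                rw [EReal.coe_le_coe_iff]
                have h1 : (inner ℝ (p t) v : ℝ) ≤ max (inner ℝ (p t) v : ℝ) (inner ℝ q v : ℝ) :=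
                  le_max_left _ _
                have h2 : (inner ℝ q v : ℝ) ≤ max (inner ℝ (p t) v : ℝ) (inner ℝ q v : ℝ) :=
                  le_max_right _ _
                nlinarith
            _ ≤ J v := by
                rcases max_cases (inner ℝ (p t) v : ℝ) (inner ℝ q v : ℝ) with ⟨h, _⟩ | ⟨h, _⟩ <;>
                  rw [h] <;> assumption
        · have ha : ((inner ℝ (p t) (u t) : ℝ) : EReal) = J (u t) := (hsub t ht).2
          have hb : ((inner ℝ q (u t) : ℝ) : EReal) = J (u t) := hq.2
          have hab : (inner ℝ q (u t) : ℝ) = (inner ℝ (p t) (u t) : ℝ) := by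
            have := hb.trans ha.symm
            exact_mod_cast this
          have hin : (inner ℝ ((1 - ε) • p t + ε • q) (u t) : ℝ)
              = (1 - ε) * (inner ℝ (p t) (u t) : ℝ) + ε * (inner ℝ q (u t) : ℝ) := by
            simp [inner_add_left, real_inner_smul_left]
          rw [hin, hab]
          rw [← ha]
          norm_cast
          ring
      -- extract the inequality on the inner ℝ product
      by_contra hc
      push_neg at hc
      set c : ℝ := (inner ℝ (p t) (q - p t) : ℝ) with hcdef
      set d : ℝ := ‖q - p t‖ ^ 2 with hddef
      have hd0 : 0 ≤ d := by positivity
      set ε : ℝ := min 1 ((-c) / (d + 1)) with hεdef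
      have hε0 : 0 < ε := by
        apply lt_min one_pos
        apply div_pos (by linarith) (by linarith)
      have hε1 : ε ≤ 1 := min_le_left _ _
      have h := hnorm ε hε0 hε1
      have hsq : ‖p t‖ ^ 2 ≤ ‖p t + ε • (q - p t)‖ ^ 2 := by
        apply pow_le_pow_left₀ (norm_nonneg _) h
      rw [norm_add_sq_real, real_inner_smul_right, norm_smul] at hsq
      have hεd : ε * (d + 1) ≤ -c := by
        have : ε ≤ (-c) / (d + 1) := min_le_right _ _
        calc ε * (d + 1) ≤ ((-c) / (d + 1)) * (d + 1) := by
              apply mul_le_mul_of_nonneg_right this (by linarith)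
          _ = -c := by field_simp
      have hns : ‖ε • (q - p t)‖ ^ 2 = ε ^ 2 * d := by
        rw [norm_smul, mul_pow, hddef]
        simp [abs_of_pos hε0]
      rw [norm_smul] at hns
      nlinarith [hsq, hεd, sq_nonneg ε]
    have : (inner ℝ (p t) q : ℝ) - (inner ℝ (p t) (p t) : ℝ) ≥ 0 := by
      rw [inner_sub_right] at hlow
      linarith
    linarith
  refine ⟨?_, ?_, ?_⟩
  · intro r s t hr hrs hst
    have ht : 0 < t := lt_of_lt_of_le hr (hrs.trans hst)
    have h1 := key t ht (p s) (hprev s t (lt_of_lt_of_le hr hrs) hst)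
    have h2 := key t ht (p r) (hprev r t hr (hrs.trans hst))
    rw [inner_sub_right, h1, h2, sub_self]
  · intro s₁ t₁ s₂ t₂ hs₁ h1 h2 h3
    have ht₁ : 0 < t₁ := lt_of_lt_of_le hs₁ h1
    have hs₂ : 0 < s₂ := lt_of_lt_of_le ht₁ h2
    have ht₂ : 0 < t₂ := lt_of_lt_of_le hs₂ h3
    have k1 := key t₂ ht₂ (p t₁) (hprev t₁ t₂ ht₁ (h2.trans h3))
    have k2 := key t₂ ht₂ (p s₁) (hprev s₁ t₂ hs₁ (h1.trans (h2.trans h3)))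
    have k3 := key s₂ hs₂ (p t₁) (hprev t₁ s₂ ht₁ h2)
    have k4 := key s₂ hs₂ (p s₁) (hprev s₁ s₂ hs₁ (h1.trans h2))
    rw [inner_sub_left, inner_sub_right, inner_sub_right]
    have c1 : (inner ℝ (p t₁) (p t₂) : ℝ) = inner ℝ (p t₂) (p t₁) := real_inner_comm _ _
    have c2 : (inner ℝ (p t₁) (p s₂) : ℝ) = inner ℝ (p s₂) (p t₁) := real_inner_comm _ _
    have c3 : (inner ℝ (p s₁) (p t₂) : ℝ) = inner ℝ (p t₂) (p s₁) := real_inner_comm _ _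
    have c4 : (inner ℝ (p s₁) (p s₂) : ℝ) = inner ℝ (p s₂) (p s₁) := real_inner_comm _ _
    linarith [k1, k2, k3, k4]
  · intro s t hs hst
    have ht : 0 < t := lt_of_lt_of_le hs hst
    refine ⟨(hprev s t hs hst).1, ?_⟩
    have h1 := key t ht (p s) (hprev s t hs hst)
    rw [real_inner_comm, h1]
    exact (heig t ht).2
end
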